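/- Let G be an n-resource selection game. Then: (a) the maximum of E_G(S) over all nonempty S ⊆ {1,…,n} for which E_G(S) is defined is attained and is a real number; (b) if moreover f_1, …, f_n are continuous, then h_G equals this maximum, i.e., h_G = max{E_G(S) : S ⊆ {1,…,n} nonempty, E_G(S) defined}. -/

import Mathlib

open scoped NNReal

/-- `EqDistOn n f S t h`: the total mass `t` admits an equalizing distribution
among the functions `(f k)_{k ∈ S}` with common value `h`; when this holds, the
equalization `Eq⟨f_k : k ∈ S⟩(t)` is defined and equals `h`. -/
def EqDistOn (n : ℕ) (f : Fin n → ℝ≥0 → ℝ) (S : Finset (Fin n)) (t : ℝ≥0) (h : ℝ) : Prop :=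
  ∃ ν : Fin n → ℝ≥0, ∑ k ∈ S, ν k = t ∧ ∀ k ∈ S, f k (ν k) = h

/-- The total mass `Σ {μ R : ∅ ≠ R ⊆ S}` of the player types that may consume
only from resources in `S`. -/
def innerMass (n : ℕ) (μ : Finset (Fin n) → ℝ≥0) (S : Finset (Fin n)) : ℝ≥0 :=
  ∑ R ∈ S.powerset.filter (fun R => R.Nonempty), μ R

/-- The total mass `Σ {μ R : ∅ ≠ R ⊆ S, R ∩ S' ≠ ∅}` of the player types
within `S` that may consume from some resource of `S'`. -/
def touchMass (n : ℕ) (μ : Finset (Fin n) → ℝ≥0) (S S' : Finset (Fin n)) : ℝ≥0 :=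
  ∑ R ∈ S.powerset.filter (fun R => R.Nonempty ∧ (R ∩ S').Nonempty), μ R

/-- `MemD n f μ V S e`: the nonempty set `S` of resources of the game with
resource set `V` is an element of `D_G` with `E_G(S) = e`, i.e., `E_G(S)` is
defined and equals `e` and `M_G(S) = ∅` (for every nonempty `S' ⊆ S` there is
some `t ≤ touchMass S S'` whose equalization among `(f k)_{k ∈ S'}` is defined
and equals `e`). -/
def MemD (n : ℕ) (f : Fin n → ℝ≥0 → ℝ) (μ : Finset (Fin n) → ℝ≥0)
    (V : Finset (Fin n)) (S : Finset (Fin n)) (e : ℝ) : Prop :=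
  S.Nonempty ∧ S ⊆ V ∧ EqDistOn n f S (innerMass n μ S) e ∧
  ∀ S' ⊆ S, S'.Nonempty → ∃ t ≤ touchMass n μ S S', EqDistOn n f S' t e

/-- `IsHG n f μ V h`: `h` is the maximum `h_G = max_{S ∈ D_G} E_G(S)` of the
game with cost functions `f`, masses `μ` and resource set `V`. -/
def IsHG (n : ℕ) (f : Fin n → ℝ≥0 → ℝ) (μ : Finset (Fin n) → ℝ≥0)
    (V : Finset (Fin n)) (h : ℝ) : Prop :=
  (∃ S, MemD n f μ V S h) ∧ ∀ S e, MemD n f μ V S e → e ≤ h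

lemma eqdist_lt_false {n : ℕ} {f : Fin n → ℝ≥0 → ℝ} (hmono : ∀ j, Monotone (f j))
    {S : Finset (Fin n)} (hS : S.Nonempty) {t : ℝ≥0} {e e' : ℝ}
    (h1 : EqDistOn n f S t e) (h2 : EqDistOn n f S t e') (hlt : e < e') : False := by
  obtain ⟨ν, hν, hf⟩ := h1
  obtain ⟨ν', hν', hf'⟩ := h2
  have hptw : ∀ k ∈ S, ν k < ν' k := by
    intro k hk
    by_contra hle
    push_neg at hle
    have := hmono k hle
    rw [hf k hk, hf' k hk] at this
    exact absurd this (not_le.2 hlt)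
  have := Finset.sum_lt_sum_of_nonempty hS hptw
  rw [hν, hν'] at this
  exact lt_irrefl _ this

lemma eqdist_unique {n : ℕ} {f : Fin n → ℝ≥0 → ℝ} (hmono : ∀ j, Monotone (f j))
    {S : Finset (Fin n)} (hS : S.Nonempty) {t : ℝ≥0} {e e' : ℝ}
    (h1 : EqDistOn n f S t e) (h2 : EqDistOn n f S t e') : e = e' := by
  rcases lt_trichotomy e e' with h | h | h
  · exact (eqdist_lt_false hmono hS h1 h2 h).elim
  · exact h
  · exact (eqdist_lt_false hmono hS h2 h1 h).elim

lemma innerMass_empty {n : ℕ} (μ : Finset (Fin n) → ℝ≥0) :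
    innerMass n μ (∅ : Finset (Fin n)) = 0 := by
  simp [innerMass, Finset.powerset_empty, Finset.filter_singleton, Finset.not_nonempty_empty]

lemma inner_split {n : ℕ} (μ : Finset (Fin n) → ℝ≥0) (S S' : Finset (Fin n)) :
    innerMass n μ S = touchMass n μ S S' + innerMass n μ (S \ S') := by
  classical
  unfold innerMass touchMass
  rw [← Finset.sum_filter_add_sum_filter_not (S.powerset.filter (fun R => R.Nonempty))
      (fun R => (R ∩ S').Nonempty)]
  congr 1
  · rw [Finset.filter_filter]
  · rw [Finset.filter_filter]
    apply Finset.sum_congr _ fun _ _ => rfl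
    ext R
    simp only [Finset.mem_filter, Finset.mem_powerset, Finset.subset_sdiff,
      Finset.not_nonempty_iff_eq_empty, ← Finset.disjoint_iff_inter_eq_empty]
    tauto

lemma exists_eqdist_of_le {n : ℕ} (f : Fin n → ℝ≥0 → ℝ) (hmono : ∀ j, Monotone (f j))
    (hcont : ∀ j, Continuous (f j)) {T : Finset (Fin n)} (hT : T.Nonempty)
    (ν : Fin n → ℝ≥0) (M : ℝ) (hν : ∀ k ∈ T, f k (ν k) = M)
    {s' : ℝ≥0} (hs : ∑ k ∈ T, ν k ≤ s') :
    ∃ e, EqDistOn n f T s' e := by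
  classical
  set C : Set (Fin n → ℝ≥0) :=
    {x | (∀ k, k ∉ T → x k = 0) ∧ (∑ k ∈ T, x k ≤ s') ∧
      ∀ j ∈ T, ∀ k ∈ T, f j (x j) = f k (x k)} with hCdef
  have hC1 : IsClosed {x : Fin n → ℝ≥0 | ∀ k, k ∉ T → x k = 0} := by
    have h : {x : Fin n → ℝ≥0 | ∀ k, k ∉ T → x k = 0} =
        ⋂ k, ⋂ (_ : k ∉ T), {x | x k = 0} := by ext x; simp
    rw [h]
    exact isClosed_iInter fun k => isClosed_iInter fun _ =>
      isClosed_eq (continuous_apply k) continuous_const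
  have hC2 : IsClosed {x : Fin n → ℝ≥0 | ∑ k ∈ T, x k ≤ s'} :=
    isClosed_le (continuous_finset_sum T fun k _ => continuous_apply k) continuous_const
  have hC3 : IsClosed {x : Fin n → ℝ≥0 | ∀ j ∈ T, ∀ k ∈ T, f j (x j) = f k (x k)} := by
    have h : {x : Fin n → ℝ≥0 | ∀ j ∈ T, ∀ k ∈ T, f j (x j) = f k (x k)} =
        ⋂ j, ⋂ (_ : j ∈ T), ⋂ k, ⋂ (_ : k ∈ T), {x | f j (x j) = f k (x k)} := by ext x; simp
    rw [h]
    exact isClosed_iInter fun j => isClosed_iInter fun _ => isClosed_iInter fun k =>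
      isClosed_iInter fun _ =>
        isClosed_eq ((hcont j).comp (continuous_apply j)) ((hcont k).comp (continuous_apply k))
  have hCclosed : IsClosed C := by
    have hEq : C = {x : Fin n → ℝ≥0 | ∀ k, k ∉ T → x k = 0} ∩
        ({x | ∑ k ∈ T, x k ≤ s'} ∩ {x | ∀ j ∈ T, ∀ k ∈ T, f j (x j) = f k (x k)}) := by
      ext x
      simp only [hCdef, Set.mem_setOf_eq, Set.mem_inter_iff]
    rw [hEq]
    exact hC1.inter (hC2.inter hC3)
  have hCcompact : IsCompact C := by
    refine IsCompact.of_isClosed_subset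
      (isCompact_univ_pi (fun _ : Fin n => isCompact_Icc (a := (0 : ℝ≥0)) (b := s')))
      hCclosed ?_
    intro x hx
    rw [Set.mem_univ_pi]
    intro k
    refine ⟨zero_le, ?_⟩
    by_cases hk : k ∈ T
    · exact le_trans (Finset.single_le_sum (fun i _ => zero_le) hk) hx.2.1
    · rw [hx.1 k hk]; exact zero_le
  have hx0 : (fun k => if k ∈ T then ν k else 0) ∈ C := by
    refine ⟨fun k hk => by simp [hk], ?_, ?_⟩
    · calc ∑ k ∈ T, (if k ∈ T then ν k else 0) = ∑ k ∈ T, ν k :=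
            Finset.sum_congr rfl (fun k hk => by simp [hk])
        _ ≤ s' := hs
    · intro j hj k hk
      simp only [hj, hk, if_true]
      rw [hν j hj, hν k hk]
  obtain ⟨xs, hxsC, hmax'⟩ := hCcompact.exists_isMaxOn ⟨_, hx0⟩
    ((continuous_finset_sum T fun k _ => continuous_apply k).continuousOn)
  have hmax : ∀ y ∈ C, ∑ k ∈ T, y k ≤ ∑ k ∈ T, xs k := fun y hy => hmax' hy
  obtain ⟨k₀, hk₀⟩ := hT
  set e' : ℝ := f k₀ (xs k₀) with he'def
  have hxe : ∀ k ∈ T, f k (xs k) = e' := fun k hk => hxsC.2.2 k hk k₀ hk₀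
  have h1 : ∑ k ∈ T, xs k ≤ s' := hxsC.2.1
  suffices hts : ∑ k ∈ T, xs k = s' by
    exact ⟨e', xs, hts, hxe⟩
  refine le_antisymm h1 (le_of_not_gt ?_)
  intro hlt
  set δ : ℝ≥0 := (s' - ∑ k ∈ T, xs k) / (T.card : ℝ≥0) with hδdef
  have hcardne : (T.card : ℝ≥0) ≠ 0 := by
    exact_mod_cast (Finset.card_pos.2 ⟨k₀, hk₀⟩).ne'
  have hδ : 0 < δ := by
    apply div_pos (tsub_pos_of_lt hlt)
    exact lt_of_le_of_ne zero_le (Ne.symm hcardne)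
  have hsumδ : ∑ k ∈ T, (xs k + δ) = s' := by
    rw [Finset.sum_add_distrib, Finset.sum_const, nsmul_eq_mul, hδdef, mul_comm,
      div_mul_cancel₀ _ hcardne, add_tsub_cancel_of_le h1]
  -- step 1: saturate at level e'
  set xh : Fin n → ℝ≥0 := fun k => if k ∈ T then
      sSup (Set.Icc (xs k) (xs k + δ) ∩ {y | f k y ≤ e'}) else 0 with hxhdef
  have hbddS : ∀ k, BddAbove (Set.Icc (xs k) (xs k + δ) ∩ {y | f k y ≤ e'}) :=
    fun k => ⟨xs k + δ, fun y hy => hy.1.2⟩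
  have hxh : ∀ k ∈ T, xh k ∈ Set.Icc (xs k) (xs k + δ) ∩ {y | f k y ≤ e'} := by
    intro k hk
    have hclosed : IsClosed (Set.Icc (xs k) (xs k + δ) ∩ {y | f k y ≤ e'}) :=
      isClosed_Icc.inter (isClosed_le (hcont k) continuous_const)
    have hne : (Set.Icc (xs k) (xs k + δ) ∩ {y | f k y ≤ e'}).Nonempty :=
      ⟨xs k, ⟨le_rfl, le_self_add⟩, le_of_eq (hxe k hk)⟩
    have := hclosed.csSup_mem hne (hbddS k)
    simpa [hxhdef, hk] using this
  have hxhval : ∀ k ∈ T, f k (xh k) = e' := by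
    intro k hk
    refine le_antisymm (hxh k hk).2 ?_
    rw [← hxe k hk]
    exact hmono k (hxh k hk).1.1
  have hxhC : xh ∈ C := by
    refine ⟨fun k hk => by simp [hxhdef, hk], ?_, ?_⟩
    · calc ∑ k ∈ T, xh k ≤ ∑ k ∈ T, (xs k + δ) :=
            Finset.sum_le_sum fun k hk => (hxh k hk).1.2
        _ = s' := hsumδ
        _ ≤ s' := le_rfl
    · intro j hj k hk
      rw [hxhval j hj, hxhval k hk]
  have hxh_eq : ∀ k ∈ T, xh k = xs k := by
    intro k hk
    by_contra hne'
    have hlt' : xs k < xh k := lt_of_le_of_ne (hxh k hk).1.1 (Ne.symm hne')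
    have := Finset.sum_lt_sum (fun i hi => (hxh i hi).1.1) ⟨k, hk, hlt'⟩
    exact absurd (hmax xh hxhC) (not_le.2 this)
  have hP : ∀ k ∈ T, e' < f k (xs k + δ) := by
    intro k hk
    by_contra hle
    push_neg at hle
    have hmem : xs k + δ ∈ Set.Icc (xs k) (xs k + δ) ∩ {y | f k y ≤ e'} :=
      ⟨⟨le_self_add, le_rfl⟩, hle⟩
    have h2 : xs k + δ ≤ xh k := by
      have := le_csSup (hbddS k) hmem
      simpa [hxhdef, hk] using this
    rw [hxh_eq k hk] at h2
    have : δ ≤ 0 := by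
      have := add_le_add_iff_left (xs k) |>.1 (by simpa using h2 : xs k + δ ≤ xs k + 0)
      exact this
    exact absurd hδ (not_lt.2 this)
  -- step 2: push to a strictly higher level
  set e'' : ℝ := T.inf' ⟨k₀, hk₀⟩ (fun k => f k (xs k + δ)) with he''def
  have hP' : e' < e'' := by
    obtain ⟨k, hk, hkeq⟩ := Finset.exists_mem_eq_inf' (⟨k₀, hk₀⟩ : T.Nonempty)
      (fun k => f k (xs k + δ))
    have hke : e'' = f k (xs k + δ) := hkeq
    rw [hke]
    exact hP k hk
  set z : Fin n → ℝ≥0 := fun k => if k ∈ T then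
      sInf (Set.Icc (xs k) (xs k + δ) ∩ {y | e'' ≤ f k y}) else 0 with hzdef
  have hz : ∀ k ∈ T, z k ∈ Set.Icc (xs k) (xs k + δ) ∩ {y | e'' ≤ f k y} := by
    intro k hk
    have hclosed : IsClosed (Set.Icc (xs k) (xs k + δ) ∩ {y | e'' ≤ f k y}) :=
      isClosed_Icc.inter (isClosed_le continuous_const (hcont k))
    have hne : (Set.Icc (xs k) (xs k + δ) ∩ {y | e'' ≤ f k y}).Nonempty :=
      ⟨xs k + δ, ⟨le_self_add, le_rfl⟩, by show e'' ≤ f k (xs k + δ); exact Finset.inf'_le _ hk⟩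
    have := hclosed.csInf_mem hne (OrderBot.bddBelow _)
    simpa [hzdef, hk] using this
  have hzgt : ∀ k ∈ T, xs k < z k := by
    intro k hk
    refine lt_of_le_of_ne (hz k hk).1.1 ?_
    intro heq
    have h2 : e'' ≤ f k (z k) := (hz k hk).2
    rw [← heq, hxe k hk] at h2
    exact absurd h2 (not_le.2 hP')
  have hzval : ∀ k ∈ T, f k (z k) = e'' := by
    intro k hk
    refine le_antisymm ?_ (hz k hk).2
    have hclosed : IsClosed {y : ℝ≥0 | f k y ≤ e''} := isClosed_le (hcont k) continuous_const
    have hsub : Set.Ioo (xs k) (z k) ⊆ {y : ℝ≥0 | f k y ≤ e''} := by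
      intro y hy
      by_contra hgt
      simp only [Set.mem_setOf_eq, not_le] at hgt
      have hymem : y ∈ Set.Icc (xs k) (xs k + δ) ∩ {y | e'' ≤ f k y} :=
        ⟨⟨hy.1.le, hy.2.le.trans (hz k hk).1.2⟩, hgt.le⟩
      have h3 : z k ≤ y := by
        have := csInf_le (OrderBot.bddBelow _) hymem
        simpa [hzdef, hk] using this
      exact absurd h3 (not_le.2 hy.2)
    have hzc : z k ∈ closure (Set.Ioo (xs k) (z k)) := by
      rw [closure_Ioo (hzgt k hk).ne]
      exact ⟨(hzgt k hk).le, le_rfl⟩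
    exact closure_minimal hsub hclosed hzc
  have hzC : z ∈ C := by
    refine ⟨fun k hk => by simp [hzdef, hk], ?_, ?_⟩
    · calc ∑ k ∈ T, z k ≤ ∑ k ∈ T, (xs k + δ) :=
            Finset.sum_le_sum fun k hk => (hz k hk).1.2
        _ = s' := hsumδ
    · intro j hj k hk
      rw [hzval j hj, hzval k hk]
  have := Finset.sum_lt_sum_of_nonempty ⟨k₀, hk₀⟩ hzgt
  exact absurd (hmax z hzC) (not_le.2 this)

lemma exists_memD {n : ℕ} (f : Fin n → ℝ≥0 → ℝ) (μ : Finset (Fin n) → ℝ≥0)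
    (hmono : ∀ j, Monotone (f j)) (hcont : ∀ j, Continuous (f j)) (M : ℝ)
    (hMmax : ∀ (S : Finset (Fin n)) (e : ℝ), S.Nonempty →
      EqDistOn n f S (innerMass n μ S) e → e ≤ M) :
    ∀ m : ℕ, ∀ S : Finset (Fin n), S.card ≤ m → S.Nonempty →
      EqDistOn n f S (innerMass n μ S) M → ∃ S₀, MemD n f μ Finset.univ S₀ M := by
  intro m
  induction m with
  | zero =>
    intro S hcard hne _
    exact absurd hcard (by have := hne.card_pos; omega)
  | succ m ih =>
    intro S hcard hne hEq
    obtain ⟨ν, hνs, hνf⟩ := hEq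
    by_cases hA : ∀ T ⊆ S, innerMass n μ T ≤ ∑ k ∈ T, ν k
    · refine ⟨S, hne, Finset.subset_univ S, ⟨ν, hνs, hνf⟩, ?_⟩
      intro S' hS' hS'ne
      refine ⟨∑ k ∈ S', ν k, ?_, ν, rfl, fun k hk => hνf k (hS' hk)⟩
      have hsplit := inner_split μ S S'
      have hsd : ∑ k ∈ S \ S', ν k + ∑ k ∈ S', ν k = ∑ k ∈ S, ν k := Finset.sum_sdiff hS'
      have h2 : innerMass n μ (S \ S') ≤ ∑ k ∈ S \ S', ν k := hA _ Finset.sdiff_subset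
      have hkey : ∑ k ∈ S', ν k + innerMass n μ (S \ S') ≤
          touchMass n μ S S' + innerMass n μ (S \ S') := by
        calc ∑ k ∈ S', ν k + innerMass n μ (S \ S')
            ≤ ∑ k ∈ S', ν k + ∑ k ∈ S \ S', ν k := by gcongr
          _ = ∑ k ∈ S, ν k := by rw [add_comm]; exact hsd
          _ = innerMass n μ S := hνs
          _ = touchMass n μ S S' + innerMass n μ (S \ S') := hsplit
      exact le_of_add_le_add_right hkey
    · push_neg at hA
      obtain ⟨T, hTS, hTlt⟩ := hA
      have hTne : T.Nonempty := by
        rcases T.eq_empty_or_nonempty with h | h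
        · rw [h, innerMass_empty] at hTlt
          simp at hTlt
        · exact h
      have hTneq : T ≠ S := by
        intro h
        rw [h, hνs] at hTlt
        exact lt_irrefl _ hTlt
      obtain ⟨e, heq⟩ := exists_eqdist_of_le f hmono hcont hTne ν M
        (fun k hk => hνf k (hTS hk)) hTlt.le
      have heM : e = M := by
        refine le_antisymm (hMmax T e hTne heq) (le_of_not_gt ?_)
        intro hlt
        obtain ⟨ν', hν's, hν'f⟩ := heq
        have hptw : ∀ k ∈ T, ν' k < ν k := by
          intro k hk
          by_contra h
          push_neg at h
          have := hmono k h
          rw [hν'f k hk, hνf k (hTS hk)] at this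
          exact absurd this (not_le.2 hlt)
        have hss := Finset.sum_lt_sum_of_nonempty hTne hptw
        rw [hν's] at hss
        exact absurd hTlt (not_lt.2 hss.le)
      have hTcard : T.card ≤ m := by
        have h1 : T.card < S.card := Finset.card_lt_card (hTS.ssubset_of_ne hTneq)
        omega
      exact ih T hTcard hTne (heM ▸ heq)


/-- (a) The maximum of `E_G(S)` over all nonempty `S` for
which `E_G(S)` is defined is attained and is a real number; (b) if the cost
functions are continuous, then `h_G` equals this maximum. -/
theorem hG_eq_max_over_all (n : ℕ) (hn : 0 < n) (f : Fin n → ℝ≥0 → ℝ)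
    (μ : Finset (Fin n) → ℝ≥0) (hmono : ∀ j, Monotone (f j)) :
    (∃ M : ℝ,
      (∃ S : Finset (Fin n), S.Nonempty ∧ EqDistOn n f S (innerMass n μ S) M) ∧
      (∀ (S : Finset (Fin n)) (e : ℝ), S.Nonempty →
        EqDistOn n f S (innerMass n μ S) e → e ≤ M)) ∧
    ((∀ j, Continuous (f j)) →
      ∀ hG M : ℝ, IsHG n f μ Finset.univ hG →
        ((∃ S : Finset (Fin n), S.Nonempty ∧ EqDistOn n f S (innerMass n μ S) M) ∧
         (∀ (S : Finset (Fin n)) (e : ℝ), S.Nonempty →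
           EqDistOn n f S (innerMass n μ S) e → e ≤ M)) →
        hG = M) := by
  constructor
  · -- part (a)
    set E : Set ℝ :=
      {e : ℝ | ∃ S : Finset (Fin n), S.Nonempty ∧ EqDistOn n f S (innerMass n μ S) e} with hEdef
    have hEfin : E.Finite := by
      have hsub : E ⊆ ⋃ S : Finset (Fin n),
          {e | S.Nonempty ∧ EqDistOn n f S (innerMass n μ S) e} := by
        rintro e ⟨S, hS⟩
        exact Set.mem_iUnion.2 ⟨S, hS⟩
      refine Set.Finite.subset (Set.finite_iUnion fun S => ?_) hsub
      apply Set.Subsingleton.finite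
      intro a ha b hb
      exact eqdist_unique hmono ha.1 ha.2 hb.2
    have hEne : E.Nonempty := by
      refine ⟨f ⟨0, hn⟩ (innerMass n μ {⟨0, hn⟩}), ⟨{⟨0, hn⟩}, Finset.singleton_nonempty _,
        fun _ => innerMass n μ {⟨0, hn⟩}, by simp, ?_⟩⟩
      intro k hk
      rw [Finset.mem_singleton] at hk
      subst hk
      rfl
    obtain ⟨M, hME, hMmax'⟩ := Set.Finite.exists_maximalFor id E hEfin hEne
    obtain ⟨S, hS⟩ := hME
    refine ⟨M, ⟨S, hS⟩, ?_⟩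
    intro S' e hS' hE'
    by_contra hgt
    push_neg at hgt
    have := hMmax' ⟨S', hS', hE'⟩ hgt.le
    simp only [id] at this
    exact absurd hgt (not_lt.2 this)
  · -- part (b)
    intro hcont hG M hIs hM
    obtain ⟨⟨S₁, hS₁ne, hS₁Eq⟩, hMmax⟩ := hM
    have hle1 : hG ≤ M := by
      obtain ⟨S, hmem⟩ := hIs.1
      exact hMmax S hG hmem.1 hmem.2.2.1
    have hle2 : M ≤ hG := by
      obtain ⟨S₀, hmem⟩ := exists_memD f μ hmono hcont M hMmax S₁.card S₁ le_rfl hS₁ne hS₁Eq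
      exact hIs.2 S₀ M hmem
    exact le_antisymm hle1 hle2
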